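/- Let C be an integer code of length n, amplitude N = q₁⋯qₙ, cardinality K = |C| ≥ 2, and minimum weighted distance D = D(C). Then for every set of coordinates I ⊆ {1,…,n} with K · wt(I) > N, one has D ≤ wt(I); in other words, D ≤ min{wt(I) : I ⊆ {1,…,n}, K · wt(I) > N}. -/

import Mathlib

/-- The weight of a set `I` of coordinates: the product of the moduli indexed by `I`. -/
def wtS {ι : Type} (q : ι → ℕ) (I : Finset ι) : ℕ := ∏ i ∈ I, q i

/-- The weighted distance between two vectors of `ℤ/q₁ℤ × ⋯ × ℤ/qₙℤ`. -/
def wdist {ι : Type} [Fintype ι] (q : ι → ℕ) (a b : ∀ i : ι, ZMod (q i)) : ℕ :=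
  ∏ i ∈ Finset.univ.filter (fun i => a i ≠ b i), q i

/-- The minimum weighted distance of an integer code `C ⊆ ℤ/q₁ℤ × ⋯ × ℤ/qₙℤ`. -/
noncomputable def minDist {ι : Type} [Fintype ι] (q : ι → ℕ)
    (C : Finset (∀ i : ι, ZMod (q i))) : ℕ :=
  sInf {d : ℕ | ∃ a ∈ C, ∃ b ∈ C, a ≠ b ∧ d = wdist q a b}

/-- Rephrased Singleton bound: for every set of coordinates `I` with `K * wt(I) > N`
one has `D ≤ wt(I)`; in other words `D ≤ min {wt(I) ∣ K * wt(I) > N}`. -/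
theorem statement1 {n : ℕ} (hn : 1 ≤ n) (q : Fin n → ℕ) (hq : ∀ i, 2 ≤ q i)
    (C : Finset (∀ i : Fin n, ZMod (q i))) (hK : 2 ≤ C.card) :
    (∀ I : Finset (Fin n), (∏ i, q i) < C.card * wtS q I → minDist q C ≤ wtS q I)
    ∧ minDist q C ≤
        sInf {w : ℕ | ∃ I : Finset (Fin n), (∏ i, q i) < C.card * wtS q I ∧ w = wtS q I} := by
  haveI : ∀ i, NeZero (q i) := fun i => ⟨by have := hq i; omega⟩
  have hwpos : ∀ I : Finset (Fin n), 0 < wtS q I := fun I =>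
    Finset.prod_pos fun i _ => by have := hq i; omega
  have main : ∀ I : Finset (Fin n), (∏ i, q i) < C.card * wtS q I → minDist q C ≤ wtS q I := by
    intro I hI
    -- the complement has few possible values
    have hsplit : (∏ i ∈ I, q i) * ∏ i ∈ Iᶜ, q i = ∏ i, q i :=
      Finset.prod_mul_prod_compl I q
    have hcomp : (∏ i ∈ Iᶜ, q i) < C.card := by
      have h1 : (∏ i ∈ I, q i) * ∏ i ∈ Iᶜ, q i < (∏ i ∈ I, q i) * C.card := by
        rw [hsplit]
        calc (∏ i, q i) < C.card * wtS q I := hI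
        _ = (∏ i ∈ I, q i) * C.card := by rw [wtS, mul_comm]
      exact Nat.lt_of_mul_lt_mul_left h1
    -- pigeonhole on the restriction to Iᶜ
    have hcard : (Finset.univ : Finset (∀ i : {x // x ∈ Iᶜ}, ZMod (q i))).card < C.card := by
      rw [Finset.card_univ, Fintype.card_pi]
      simp only [ZMod.card]
      calc ∏ i : {x // x ∈ Iᶜ}, q i = ∏ i ∈ Iᶜ, q i := Finset.prod_coe_sort Iᶜ q
      _ < C.card := hcomp
    obtain ⟨a, ha, b, hb, hab, heq⟩ :=
      Finset.exists_ne_map_eq_of_card_lt_of_maps_to (f := fun v (i : {x // x ∈ Iᶜ}) => v i.1)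
        hcard (fun v _ => Finset.mem_univ _)
    have hagree : ∀ i ∈ Iᶜ, a i = b i := fun i hi => congrFun heq ⟨i, hi⟩
    have hsub : Finset.univ.filter (fun i => a i ≠ b i) ⊆ I := by
      intro i hi
      simp only [Finset.mem_filter] at hi
      by_contra h
      exact hi.2 (hagree i (Finset.mem_compl.mpr h))
    have hdvd : wdist q a b ∣ wtS q I := Finset.prod_dvd_prod_of_subset _ _ q hsub
    have hle : wdist q a b ≤ wtS q I := Nat.le_of_dvd (hwpos I) hdvd
    exact le_trans (Nat.sInf_le ⟨a, ha, b, hb, hab, rfl⟩) hle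
  refine ⟨main, ?_⟩
  have hne : {w : ℕ | ∃ I : Finset (Fin n), (∏ i, q i) < C.card * wtS q I ∧ w = wtS q I}.Nonempty := by
    refine ⟨wtS q Finset.univ, Finset.univ, ?_, rfl⟩
    have h1 : wtS q (Finset.univ : Finset (Fin n)) = ∏ i, q i := rfl
    have h2 := hwpos (Finset.univ : Finset (Fin n))
    rw [h1]
    nlinarith [h2]
  obtain ⟨I, hI, hw⟩ := Nat.sInf_mem hne
  rw [hw]
  exact main I hI
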